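/- Fix a risk aversion parameter θ > 0 and define the entropy risk of the MNL distribution by U^{ent}(v) = −(1/θ)·ln( (1 + Σ_{i∈S} e^{−θ r_i} v_i) / D(v) ). Then (a) 0 ≤ U^{ent}(v) ≤ 1 for every v ∈ [0,1]^S; and (b) for all v ≤ v' in [0,1]^S, |U^{ent}(v') − U^{ent}(v)| ≤ ((2e^{θ}/θ)/D(v)) · Σ_{i∈S}(v'_i − v_i). -/

import Mathlib

/-- `D(v) = 1 + ∑_{i∈S} v i`, the MNL normalization constant. -/
noncomputable def mnlD {ι : Type*} (S : Finset ι) (v : ι → ℝ) : ℝ := 1 + ∑ i ∈ S, v i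

/-- The entropy risk with risk-aversion parameter `θ` of the MNL purchase-profit
distribution: `U^ent(v) = −(1/θ) ln((1 + ∑_{i∈S} e^{−θ r i} v i)/D(v))`. -/
noncomputable def mnlEntropyRisk {ι : Type*} (S : Finset ι) (r : ι → ℝ) (θ : ℝ)
    (v : ι → ℝ) : ℝ :=
  -(1 / θ) * Real.log ((1 + ∑ i ∈ S, Real.exp (-θ * r i) * v i) / mnlD S v)

/-- **Proposition (entropy risk: boundedness and Lipschitz condition).** -/
theorem entropy_risk_bounded_and_lipschitz {ι : Type*} (S : Finset ι) (r : ι → ℝ)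
    (hr : ∀ i ∈ S, 0 < r i ∧ r i ≤ 1) (θ : ℝ) (hθ : 0 < θ) :
    (∀ v : ι → ℝ, (∀ i ∈ S, 0 ≤ v i ∧ v i ≤ 1) →
      0 ≤ mnlEntropyRisk S r θ v ∧ mnlEntropyRisk S r θ v ≤ 1) ∧
    (∀ v v' : ι → ℝ, (∀ i ∈ S, 0 ≤ v i ∧ v i ≤ 1) → (∀ i ∈ S, 0 ≤ v' i ∧ v' i ≤ 1) →
      (∀ i ∈ S, v i ≤ v' i) →
      |mnlEntropyRisk S r θ v' - mnlEntropyRisk S r θ v| ≤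
        ((2 * Real.exp θ / θ) / mnlD S v) * ∑ i ∈ S, (v' i - v i)) := by
  have hθ' : (0:ℝ) < 1/θ := by positivity
  have key : ∀ v : ι → ℝ, (∀ i ∈ S, 0 ≤ v i ∧ v i ≤ 1) →
      0 < mnlD S v ∧
      0 < 1 + ∑ i ∈ S, Real.exp (-θ * r i) * v i ∧
      (1 + ∑ i ∈ S, Real.exp (-θ * r i) * v i) ≤ mnlD S v ∧
      Real.exp (-θ) * mnlD S v ≤ 1 + ∑ i ∈ S, Real.exp (-θ * r i) * v i := by
    intro v hv
    have hsum0 : ∀ i ∈ S, 0 ≤ v i := fun i hi => (hv i hi).1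
    have hD : 0 < mnlD S v := by
      have : 0 ≤ ∑ i ∈ S, v i := Finset.sum_nonneg hsum0
      unfold mnlD; linarith
    have hA : 0 < 1 + ∑ i ∈ S, Real.exp (-θ * r i) * v i := by
      have : 0 ≤ ∑ i ∈ S, Real.exp (-θ * r i) * v i :=
        Finset.sum_nonneg (fun i hi => mul_nonneg (Real.exp_nonneg _) (hsum0 i hi))
      linarith
    refine ⟨hD, hA, ?_, ?_⟩
    · unfold mnlD
      have hle : ∑ i ∈ S, Real.exp (-θ * r i) * v i ≤ ∑ i ∈ S, v i := by
        apply Finset.sum_le_sum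
        intro i hi
        have h1 : Real.exp (-θ * r i) ≤ 1 := by
          rw [Real.exp_le_one_iff]
          nlinarith [(hr i hi).1]
        nlinarith [hsum0 i hi]
      linarith
    · unfold mnlD
      rw [mul_add, mul_one, Finset.mul_sum]
      have h1 : Real.exp (-θ) ≤ 1 := by
        rw [Real.exp_le_one_iff]; linarith
      have h2 : ∑ i ∈ S, Real.exp (-θ) * v i ≤ ∑ i ∈ S, Real.exp (-θ * r i) * v i := by
        apply Finset.sum_le_sum; intro i hi
        apply mul_le_mul_of_nonneg_right _ (hsum0 i hi)
        apply Real.exp_le_exp.mpr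
        nlinarith [(hr i hi).1, (hr i hi).2]
      linarith
  have hinv : (1/θ) * θ = 1 := by field_simp
  constructor
  · intro v hv
    obtain ⟨hD, hA, hAD, hEA⟩ := key v hv
    have hratpos : 0 < (1 + ∑ i ∈ S, Real.exp (-θ * r i) * v i) / mnlD S v := div_pos hA hD
    have hrat1 : (1 + ∑ i ∈ S, Real.exp (-θ * r i) * v i) / mnlD S v ≤ 1 :=
      (div_le_one hD).mpr hAD
    have hlogle : Real.log ((1 + ∑ i ∈ S, Real.exp (-θ * r i) * v i) / mnlD S v) ≤ 0 :=
      Real.log_nonpos (le_of_lt hratpos) hrat1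
    have hloglb : -θ ≤ Real.log ((1 + ∑ i ∈ S, Real.exp (-θ * r i) * v i) / mnlD S v) := by
      rw [Real.le_log_iff_exp_le hratpos, le_div_iff₀ hD]
      linarith
    constructor
    · unfold mnlEntropyRisk
      nlinarith
    · unfold mnlEntropyRisk
      nlinarith
  · intro v v' hv hv' hvv'
    obtain ⟨hD, hA, hAD, hEA⟩ := key v hv
    obtain ⟨hD', hA', hAD', hEA'⟩ := key v' hv'
    set A := 1 + ∑ i ∈ S, Real.exp (-θ * r i) * v i with hAdef
    set A' := 1 + ∑ i ∈ S, Real.exp (-θ * r i) * v' i with hA'def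
    set Δ := ∑ i ∈ S, (v' i - v i) with hΔdef
    have hΔ0 : 0 ≤ Δ := Finset.sum_nonneg (fun i hi => by linarith [hvv' i hi])
    have hDdiff : mnlD S v' - mnlD S v = Δ := by
      unfold mnlD; rw [hΔdef, Finset.sum_sub_distrib]; ring
    have hAdiff : A' - A ≤ Δ := by
      have : A' - A = ∑ i ∈ S, Real.exp (-θ * r i) * (v' i - v i) := by
        rw [hAdef, hA'def]
        simp only [mul_sub]
        rw [Finset.sum_sub_distrib]
        ring
      rw [this, hΔdef]
      apply Finset.sum_le_sum
      intro i hi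
      have h1 : Real.exp (-θ * r i) ≤ 1 := by
        rw [Real.exp_le_one_iff]; nlinarith [(hr i hi).1]
      nlinarith [hvv' i hi]
    have hAle : A ≤ A' := by
      rw [hAdef, hA'def]
      have : ∑ i ∈ S, Real.exp (-θ * r i) * v i ≤ ∑ i ∈ S, Real.exp (-θ * r i) * v' i :=
        Finset.sum_le_sum (fun i hi =>
          mul_le_mul_of_nonneg_left (hvv' i hi) (Real.exp_nonneg _))
      linarith
    have hDle : mnlD S v ≤ mnlD S v' := by linarith [hDdiff]
    -- x = log D' - log D, y = log A' - log A
    have hx0 : 0 ≤ Real.log (mnlD S v') - Real.log (mnlD S v) :=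
      sub_nonneg.mpr (Real.log_le_log hD hDle)
    have hy0 : 0 ≤ Real.log A' - Real.log A := sub_nonneg.mpr (Real.log_le_log hA hAle)
    have hx : Real.log (mnlD S v') - Real.log (mnlD S v) ≤ Δ / mnlD S v := by
      rw [← Real.log_div (ne_of_gt hD') (ne_of_gt hD)]
      have h := Real.log_le_sub_one_of_pos (div_pos hD' hD)
      have : mnlD S v' / mnlD S v - 1 = Δ / mnlD S v := by
        field_simp
        linarith [hDdiff]
      linarith
    have hy : Real.log A' - Real.log A ≤ Real.exp θ * Δ / mnlD S v := by
      rw [← Real.log_div (ne_of_gt hA') (ne_of_gt hA)]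
      have h := Real.log_le_sub_one_of_pos (div_pos hA' hA)
      have h2 : A' / A - 1 = (A' - A) / A := by field_simp
      have h3 : (A' - A) / A ≤ Δ / (Real.exp (-θ) * mnlD S v) := by
        apply div_le_div₀ hΔ0 hAdiff (by positivity) hEA
      have h4 : Δ / (Real.exp (-θ) * mnlD S v) = Real.exp θ * Δ / mnlD S v := by
        rw [Real.exp_neg]
        field_simp
      linarith
    have hUdiff : mnlEntropyRisk S r θ v' - mnlEntropyRisk S r θ v =
        (1/θ) * ((Real.log (mnlD S v') - Real.log (mnlD S v))
          - (Real.log A' - Real.log A)) := by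
      unfold mnlEntropyRisk
      rw [Real.log_div (ne_of_gt hA') (ne_of_gt hD'),
          Real.log_div (ne_of_gt hA) (ne_of_gt hD)]
      ring
    rw [hUdiff]
    have habs : |(1/θ) * ((Real.log (mnlD S v') - Real.log (mnlD S v))
          - (Real.log A' - Real.log A))| ≤
        (1/θ) * ((Real.log (mnlD S v') - Real.log (mnlD S v)) + (Real.log A' - Real.log A)) := by
      rw [abs_mul, abs_of_pos hθ']
      apply mul_le_mul_of_nonneg_left _ (le_of_lt hθ')
      rw [abs_sub_comm]
      calc |(Real.log A' - Real.log A) - (Real.log (mnlD S v') - Real.log (mnlD S v))|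
          ≤ |Real.log A' - Real.log A| + |Real.log (mnlD S v') - Real.log (mnlD S v)| :=
            abs_sub _ _
        _ = (Real.log A' - Real.log A) + (Real.log (mnlD S v') - Real.log (mnlD S v)) := by
            rw [abs_of_nonneg hy0, abs_of_nonneg hx0]
        _ = _ := by ring
    have hexp1 : 1 ≤ Real.exp θ := Real.one_le_exp (le_of_lt hθ)
    have hfinal : (1/θ) * ((Real.log (mnlD S v') - Real.log (mnlD S v))
          + (Real.log A' - Real.log A)) ≤
        ((2 * Real.exp θ / θ) / mnlD S v) * Δ := by
      have hΔD : 0 ≤ Δ / mnlD S v := by positivity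
      have hstep : (Real.log (mnlD S v') - Real.log (mnlD S v)) + (Real.log A' - Real.log A)
          ≤ Δ / mnlD S v + Real.exp θ * Δ / mnlD S v := by linarith
      have h2 : Δ / mnlD S v + Real.exp θ * Δ / mnlD S v ≤ 2 * Real.exp θ * Δ / mnlD S v := by
        rw [← add_div, div_le_div_iff₀ hD hD]
        nlinarith [mul_nonneg hΔ0 hD.le, mul_le_mul_of_nonneg_right hexp1 (mul_nonneg hΔ0 hD.le)]
      have h3 : (1/θ) * (2 * Real.exp θ * Δ / mnlD S v) =
          ((2 * Real.exp θ / θ) / mnlD S v) * Δ := by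
        field_simp
      calc (1/θ) * ((Real.log (mnlD S v') - Real.log (mnlD S v)) + (Real.log A' - Real.log A))
          ≤ (1/θ) * (2 * Real.exp θ * Δ / mnlD S v) := by
            apply mul_le_mul_of_nonneg_left _ (le_of_lt hθ')
            linarith
        _ = _ := h3
    exact le_trans habs hfinal
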